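/- Let Π(acute(σ)) = Ṕ ∈ SO(n+1) for σ ∈ S_{n+1}. Then the nonzero entries of Ṕ are given by e_i^T Ṕ = (-1)^{inv_i(σ)} e_{σ(i)}^T, i.e., Ṕ_{ij} = (-1)^{inv_i(σ)} when j = σ(i) and 0 otherwise, where inv_i(σ) = |{j : i < j, σ(i) > σ(j)}|. -/

import Mathlib

/-- The number of inversions of a permutation. -/
def invNum {m : ℕ} (σ : Equiv.Perm (Fin m)) : ℕ :=
  (Finset.univ.filter (fun p : Fin m × Fin m => p.1 < p.2 ∧ σ p.2 < σ p.1)).card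

/-- `inv_i(σ) = |{j : i < j, σ(i) > σ(j)}|`. -/
def invAt {m : ℕ} (σ : Equiv.Perm (Fin m)) (i : Fin m) : ℕ :=
  (Finset.univ.filter (fun j : Fin m => i < j ∧ σ j < σ i)).card

/-- The adjacent transposition `a_k = (k, k+1)` in `S_{n+1}`. -/
def aPerm {n : ℕ} (k : Fin n) : Equiv.Perm (Fin (n + 1)) :=
  Equiv.swap k.castSucc k.succ

/-- `l` is a reduced word for `σ` (the head of the list acts first, matching the
right-action convention `σ = a_{i₁}···a_{i_k}`). -/
def IsReducedWord {n : ℕ} (σ : Equiv.Perm (Fin (n + 1))) (l : List (Fin n)) : Prop :=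
  σ = ((l.map aPerm).reverse).prod ∧ l.length = invNum σ

/-- `Ṕ_k ∈ SO(n+1)`: rotation by `π/2` in the `(e_k, e_{k+1})` plane:
`(Ṕ_k)_{k+1,k} = 1`, `(Ṕ_k)_{k,k+1} = -1`, `(Ṕ_k)_{jj} = 1` for `j ∉ {k,k+1}`. -/
def rotGen {n : ℕ} (k : Fin n) : Matrix (Fin (n + 1)) (Fin (n + 1)) ℝ :=
  Matrix.of fun r c =>
    if r = k.succ ∧ c = k.castSucc then 1
    else if r = k.castSucc ∧ c = k.succ then -1
    else if r = c ∧ r ≠ k.castSucc ∧ r ≠ k.succ then 1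
    else 0

/-- `Ṕ = Π(acute σ) = Ṕ_{i₁}···Ṕ_{i_k}` for a reduced word of `σ`. -/
def prodRot {n : ℕ} (l : List (Fin n)) : Matrix (Fin (n + 1)) (Fin (n + 1)) ℝ :=
  (l.map rotGen).prod

-- Auxiliary lemmas
lemma castSucc_ne_succ {n : ℕ} (k : Fin n) : k.castSucc ≠ k.succ := by
  simp [Fin.ext_iff]

lemma aPerm_lt {n : ℕ} (k : Fin n) {p q : Fin (n+1)} (hpq : p < q)
    (hne : ¬(p = k.castSucc ∧ q = k.succ)) : aPerm k p < aPerm k q := by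
  simp only [aPerm, Equiv.swap_apply_def]
  split_ifs <;>
    simp only [Fin.lt_def, Fin.ext_iff, Fin.val_succ, Fin.coe_castSucc, not_and, ne_eq] at * <;>
    omega

lemma aPerm_aPerm {n : ℕ} (k : Fin n) (x : Fin (n+1)) : aPerm k (aPerm k x) = x :=
  Equiv.swap_apply_self _ _ x

lemma aPerm_mul_self {n : ℕ} (k : Fin n) : aPerm k * aPerm k = 1 :=
  Equiv.swap_mul_self _ _

lemma aPerm_apply_castSucc {n : ℕ} (k : Fin n) : aPerm k k.castSucc = k.succ :=
  Equiv.swap_apply_left _ _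

lemma aPerm_apply_succ {n : ℕ} (k : Fin n) : aPerm k k.succ = k.castSucc :=
  Equiv.swap_apply_right _ _

lemma invNum_mul_of_lt {n : ℕ} (k : Fin n) (τ : Equiv.Perm (Fin (n+1)))
    (h : τ k.castSucc < τ k.succ) :
    invNum (τ * aPerm k) = invNum τ + 1 := by
  classical
  have hinj : Function.Injective
      (fun p : Fin (n+1) × Fin (n+1) => (aPerm k p.1, aPerm k p.2)) := by
    intro a b hab
    simp only [Prod.mk.injEq] at hab
    exact Prod.ext ((aPerm k).injective hab.1) ((aPerm k).injective hab.2)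
  have key : (Finset.univ.filter
        (fun p : Fin (n+1) × Fin (n+1) => p.1 < p.2 ∧ (τ * aPerm k) p.2 < (τ * aPerm k) p.1))
      = insert (k.castSucc, k.succ)
        ((Finset.univ.filter
          (fun p : Fin (n+1) × Fin (n+1) => p.1 < p.2 ∧ τ p.2 < τ p.1)).image
          (fun p => (aPerm k p.1, aPerm k p.2))) := by
    ext ⟨p, q⟩
    simp only [Finset.mem_filter, Finset.mem_univ, true_and, Finset.mem_insert,
      Finset.mem_image, Prod.mk.injEq]
    simp only [Equiv.Perm.mul_apply]
    constructor
    · rintro ⟨hpq, hinv⟩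
      by_cases hp : p = k.castSucc ∧ q = k.succ
      · exact Or.inl ⟨hp.1, hp.2⟩
      · refine Or.inr ⟨(aPerm k p, aPerm k q), ⟨aPerm_lt k hpq hp, ?_⟩,
          aPerm_aPerm k p, aPerm_aPerm k q⟩
        exact hinv
    · rintro (⟨hp, hq⟩ | ⟨⟨a, b⟩, ⟨hab, hinv⟩, hsa, hsb⟩)
      · subst hp; subst hq
        exact ⟨(@Fin.castSucc_lt_succ _ k), by rwa [aPerm_apply_succ, aPerm_apply_castSucc]⟩
      · simp only at hab hinv hsa hsb
        subst hsa; subst hsb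
        refine ⟨aPerm_lt k hab fun hEq => ?_, by rwa [aPerm_aPerm, aPerm_aPerm]⟩
        rw [hEq.1, hEq.2] at hinv
        exact absurd hinv (asymm h)
  rw [invNum, key, Finset.card_insert_of_notMem, Finset.card_image_of_injective _ hinj]
  · rfl
  · intro hmem
    simp only [Finset.mem_image, Finset.mem_filter, Finset.mem_univ, true_and,
      Prod.mk.injEq] at hmem
    obtain ⟨⟨a, b⟩, ⟨hab, -⟩, hsa, hsb⟩ := hmem
    simp only at hab hsa hsb
    have ha : a = k.succ := (aPerm k).injective (by rw [hsa, aPerm_apply_succ])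
    have hb : b = k.castSucc := (aPerm k).injective (by rw [hsb, aPerm_apply_castSucc])
    rw [ha, hb] at hab
    exact absurd hab (asymm ((@Fin.castSucc_lt_succ _ k)))

lemma invNum_mul_of_gt {n : ℕ} (k : Fin n) (τ : Equiv.Perm (Fin (n+1)))
    (h : τ k.succ < τ k.castSucc) :
    invNum (τ * aPerm k) + 1 = invNum τ := by
  have h2 : (τ * aPerm k) k.castSucc < (τ * aPerm k) k.succ := by
    simpa [Equiv.Perm.mul_apply, aPerm_apply_castSucc, aPerm_apply_succ] using h
  have := invNum_mul_of_lt k (τ * aPerm k) h2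
  rw [mul_assoc, aPerm_mul_self, mul_one] at this
  exact this.symm

lemma invNum_word_le {n : ℕ} : ∀ l : List (Fin n),
    invNum (((l.map aPerm).reverse).prod) ≤ l.length := by
  intro l
  induction l with
  | nil =>
    simp only [List.map_nil, List.reverse_nil, List.prod_nil, List.length_nil, Nat.le_zero,
      invNum, Finset.card_eq_zero, Finset.filter_eq_empty_iff]
    rintro ⟨a, b⟩ -
    simp only [Equiv.Perm.one_apply, not_and]
    exact fun h1 => asymm h1
  | cons k t ih =>
    have hprod : (((k :: t).map aPerm).reverse).prod
        = ((t.map aPerm).reverse).prod * aPerm k := by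
      simp [List.map_cons, List.reverse_cons]
    rw [hprod, List.length_cons]
    set τ := ((t.map aPerm).reverse).prod
    rcases lt_or_gt_of_ne (fun hEq : τ k.castSucc = τ k.succ =>
      castSucc_ne_succ k (τ.injective hEq)) with hlt | hgt
    · rw [invNum_mul_of_lt k τ hlt]; omega
    · have := invNum_mul_of_gt k τ hgt; omega

lemma aPerm_lt_iff {n : ℕ} (k : Fin n) {i j : Fin (n+1)} (h1 : i ≠ k.castSucc)
    (h2 : i ≠ k.succ) : i < aPerm k j ↔ i < j := by
  simp only [aPerm, Equiv.swap_apply_def]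
  split_ifs <;>
    simp only [Fin.lt_def, Fin.ext_iff, Fin.val_succ, Fin.coe_castSucc, not_and, ne_eq] at * <;>
    omega

lemma aPerm_apply_of_ne {n : ℕ} (k : Fin n) {j : Fin (n+1)} (h1 : j ≠ k.castSucc)
    (h2 : j ≠ k.succ) : aPerm k j = j :=
  Equiv.swap_apply_of_ne_of_ne h1 h2

lemma rotGen_apply {n : ℕ} (k : Fin n) (r c : Fin (n+1)) :
    rotGen k r c = if c = aPerm k r then (if r = k.castSucc then (-1:ℝ) else 1) else 0 := by
  simp only [rotGen, Matrix.of_apply, aPerm, Equiv.swap_apply_def]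
  split_ifs <;>
    simp only [Fin.ext_iff, Fin.val_succ, Fin.coe_castSucc, not_and, ne_eq] at * <;>
    first | rfl | omega | (exfalso; omega)

lemma invAt_mul_castSucc {n : ℕ} (k : Fin n) (τ : Equiv.Perm (Fin (n+1)))
    (h : τ k.castSucc < τ k.succ) :
    invAt (τ * aPerm k) k.castSucc = invAt τ k.succ + 1 := by
  classical
  have key : (Finset.univ.filter
        (fun j : Fin (n+1) => k.castSucc < j ∧ (τ * aPerm k) j < (τ * aPerm k) k.castSucc))
      = insert k.succ
        (Finset.univ.filter (fun j : Fin (n+1) => k.succ < j ∧ τ j < τ k.succ)) := by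
    ext j
    simp only [Finset.mem_filter, Finset.mem_univ, true_and, Finset.mem_insert,
      Equiv.Perm.mul_apply, aPerm_apply_castSucc]
    constructor
    · rintro ⟨hj, hinv⟩
      by_cases hjk : j = k.succ
      · exact Or.inl hjk
      · have h1 : k.succ < j := by
          simp only [Fin.lt_def, Fin.ext_iff, Fin.val_succ, Fin.coe_castSucc] at * <;> omega
        have h2 : j ≠ k.castSucc := ne_of_gt (lt_trans ((@Fin.castSucc_lt_succ _ k)) h1)
        rw [aPerm_apply_of_ne k h2 hjk] at hinv
        exact Or.inr ⟨h1, hinv⟩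
    · rintro (rfl | ⟨hj, hinv⟩)
      · exact ⟨(@Fin.castSucc_lt_succ _ k), by rw [aPerm_apply_succ]; exact h⟩
      · have h2 : j ≠ k.castSucc := ne_of_gt (lt_trans ((@Fin.castSucc_lt_succ _ k)) hj)
        refine ⟨lt_trans ((@Fin.castSucc_lt_succ _ k)) hj, ?_⟩
        rw [aPerm_apply_of_ne k h2 (ne_of_gt hj)]
        exact hinv
  rw [invAt, key, Finset.card_insert_of_notMem, invAt]
  simp only [Finset.mem_filter, Finset.mem_univ, true_and, not_and]
  exact fun hlt => absurd hlt (lt_irrefl _)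

lemma invAt_mul_succ {n : ℕ} (k : Fin n) (τ : Equiv.Perm (Fin (n+1)))
    (h : τ k.castSucc < τ k.succ) :
    invAt (τ * aPerm k) k.succ = invAt τ k.castSucc := by
  classical
  unfold invAt
  congr 1
  ext j
  simp only [Finset.mem_filter, Finset.mem_univ, true_and, Equiv.Perm.mul_apply,
    aPerm_apply_succ]
  constructor
  · rintro ⟨hj, hinv⟩
    have h2 : j ≠ k.castSucc := ne_of_gt (lt_trans ((@Fin.castSucc_lt_succ _ k)) hj)
    rw [aPerm_apply_of_ne k h2 (ne_of_gt hj)] at hinv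
    exact ⟨lt_trans ((@Fin.castSucc_lt_succ _ k)) hj, hinv⟩
  · rintro ⟨hj, hinv⟩
    have hjk : j ≠ k.succ := by
      rintro rfl
      exact absurd hinv (asymm h)
    have h1 : k.succ < j := by
      simp only [Fin.lt_def, Fin.ext_iff, Fin.val_succ, Fin.coe_castSucc, ne_eq] at * <;> omega
    have h2 : j ≠ k.castSucc := ne_of_gt hj
    rw [aPerm_apply_of_ne k h2 hjk]
    exact ⟨h1, hinv⟩

lemma invAt_mul_other {n : ℕ} (k : Fin n) (τ : Equiv.Perm (Fin (n+1))) {i : Fin (n+1)}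
    (h1 : i ≠ k.castSucc) (h2 : i ≠ k.succ) :
    invAt (τ * aPerm k) i = invAt τ i := by
  classical
  have key : (Finset.univ.filter
        (fun j : Fin (n+1) => i < j ∧ (τ * aPerm k) j < (τ * aPerm k) i))
      = (Finset.univ.filter (fun j : Fin (n+1) => i < j ∧ τ j < τ i)).image (aPerm k) := by
    ext j
    simp only [Finset.mem_filter, Finset.mem_univ, true_and, Finset.mem_image,
      Equiv.Perm.mul_apply, aPerm_apply_of_ne k h1 h2]
    constructor
    · rintro ⟨hj, hinv⟩
      refine ⟨aPerm k j, ⟨?_, hinv⟩, aPerm_aPerm k j⟩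
      rwa [aPerm_lt_iff k h1 h2]
    · rintro ⟨a, ⟨ha, hinv⟩, rfl⟩
      refine ⟨?_, by rwa [aPerm_aPerm]⟩
      rwa [aPerm_lt_iff k h1 h2]
  rw [invAt, key, Finset.card_image_of_injective _ (aPerm k).injective, invAt]

def signWord {n : ℕ} : List (Fin n) → Fin (n + 1) → ℝ
  | [], _ => 1
  | k :: t, i => (if i = k.castSucc then -1 else 1) * signWord t (aPerm k i)

lemma prodRot_apply {n : ℕ} : ∀ (l : List (Fin n)) (i j : Fin (n+1)),
    prodRot l i j = if j = ((l.map aPerm).reverse).prod i then signWord l i else 0 := by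
  intro l
  induction l with
  | nil =>
    intro i j
    simp only [prodRot, List.map_nil, List.prod_nil, List.reverse_nil, signWord,
      Matrix.one_apply, Equiv.Perm.one_apply]
    simp [eq_comm]
  | cons k t ih =>
    intro i j
    have hm : prodRot (k :: t) = rotGen k * prodRot t := by
      simp [prodRot, List.map_cons]
    have hp : (((k :: t).map aPerm).reverse).prod
        = ((t.map aPerm).reverse).prod * aPerm k := by
      simp [List.map_cons, List.reverse_cons]
    rw [hm, hp, Matrix.mul_apply]
    have hrow : ∀ c, rotGen k i c * prodRot t c j
        = if c = aPerm k i then (if i = k.castSucc then (-1:ℝ) else 1) * prodRot t c j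
          else 0 := by
      intro c
      rw [rotGen_apply]
      split_ifs <;> simp
    rw [Finset.sum_congr rfl (fun c _ => hrow c), Finset.sum_ite_eq' Finset.univ]
    simp only [Finset.mem_univ, if_true, ih (aPerm k i) j, signWord,
      Equiv.Perm.mul_apply, mul_ite, mul_zero]
    congr 1

lemma signWord_eq {n : ℕ} : ∀ (l : List (Fin n)) (σ : Equiv.Perm (Fin (n+1))),
    σ = ((l.map aPerm).reverse).prod → l.length = invNum σ →
    ∀ i, signWord l i = (-1 : ℝ) ^ invAt σ i := by
  intro l
  induction l with
  | nil =>
    intro σ hσ _ i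
    have : σ = 1 := by simpa using hσ
    subst this
    have : invAt (1 : Equiv.Perm (Fin (n+1))) i = 0 := by
      simp only [invAt, Finset.card_eq_zero, Finset.filter_eq_empty_iff]
      intro j _
      simp only [Equiv.Perm.one_apply, not_and]
      exact fun h1 => asymm h1
    rw [this]
    simp [signWord]
  | cons k t ih =>
    intro σ hσ hlen i
    have hp : (((k :: t).map aPerm).reverse).prod
        = ((t.map aPerm).reverse).prod * aPerm k := by
      simp [List.map_cons, List.reverse_cons]
    set τ := ((t.map aPerm).reverse).prod with hτ
    rw [hp] at hσ
    have htle : invNum τ ≤ t.length := invNum_word_le t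
    have hne : τ k.castSucc ≠ τ k.succ :=
      fun hEq => castSucc_ne_succ k (τ.injective hEq)
    have hlt : τ k.castSucc < τ k.succ := by
      rcases lt_or_gt_of_ne hne with hlt | hgt
      · exact hlt
      · exfalso
        have := invNum_mul_of_gt k τ hgt
        rw [← hσ] at this
        rw [List.length_cons] at hlen
        omega
    have hnum : invNum σ = invNum τ + 1 := by
      rw [hσ]; exact invNum_mul_of_lt k τ hlt
    have htred : t.length = invNum τ := by
      rw [List.length_cons] at hlen; omega
    have ihτ := ih τ rfl htred
    show (if i = k.castSucc then (-1:ℝ) else 1) * signWord t (aPerm k i)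
        = (-1 : ℝ) ^ invAt σ i
    by_cases h1 : i = k.castSucc
    · subst h1
      rw [if_pos rfl, aPerm_apply_castSucc, ihτ, hσ, invAt_mul_castSucc k τ hlt]
      rw [pow_succ]
      ring
    · by_cases h2 : i = k.succ
      · subst h2
        rw [if_neg h1, aPerm_apply_succ, ihτ, hσ, invAt_mul_succ k τ hlt, one_mul]
      · rw [if_neg h1, aPerm_apply_of_ne k h1 h2, ihτ, hσ, invAt_mul_other k τ h1 h2,
          one_mul]

/-- The entries of `Ṕ = Π(acute σ)`: `Ṕ_{ij} = (-1)^{inv_i(σ)}` if `j = σ(i)`,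
and `0` otherwise. -/
theorem stmt_12 (n : ℕ) (σ : Equiv.Perm (Fin (n + 1))) (l : List (Fin n))
    (hl : IsReducedWord σ l) :
    ∀ i j : Fin (n + 1),
      prodRot l i j = if j = σ i then (-1 : ℝ) ^ invAt σ i else 0 := by
  intro i j
  rw [prodRot_apply l i j, ← hl.1, signWord_eq l σ hl.1 hl.2 i]
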